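/- Define f₁^#(x) := π ∑_{n=0}^∞ (−1)^n (n + 1/2) exp(−(n + 1/2)²π²x/2) for x > 0. Then for every real x > 0, f₁^#(x) = (2/(πx))^{3/2} · f₁^#(4/(π²x)). -/

import Mathlib

open Real HurwitzZeta

/-- `f₁^#(x) = π ∑_{n≥0} (−1)^n (n+1/2) e^{−(n+1/2)²π²x/2}`. -/
noncomputable def fOneSharp (x : ℝ) : ℝ :=
  Real.pi * ∑' n : ℕ, (-1 : ℝ) ^ n * ((n : ℝ) + 1 / 2) *
    Real.exp (-((n : ℝ) + 1 / 2) ^ 2 * Real.pi ^ 2 * x / 2)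

private lemma hasSum_g (x : ℝ) (hx : 0 < x) :
    HasSum (fun k : ℕ ↦ (-1 : ℝ) ^ k * ((k : ℝ) + 1 / 2) *
      Real.exp (-((k : ℝ) + 1 / 2) ^ 2 * Real.pi ^ 2 * x / 2))
      (sinKernel ((1/4 : ℝ) : UnitAddCircle) (π * x / 8) / 4) := by
  have ht : 0 < π * x / 8 := by positivity
  have h := hasSum_nat_sinKernel (1/4 : ℝ) ht
  have hi : Function.Injective (fun k : ℕ ↦ 2 * k + 1) := by
    intro a b hab
    have : 2 * a + 1 = 2 * b + 1 := hab
    omega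
  have hz : ∀ n ∉ Set.range (fun k : ℕ ↦ 2 * k + 1),
      (2 * (n : ℝ) * Real.sin (2 * π * (1/4) * n) * rexp (-π * (n : ℝ) ^ 2 * (π * x / 8))) = 0 := by
    intro n hn
    have hev : Even n := by
      rcases Nat.even_or_odd n with he | ho
      · exact he
      · exact absurd ⟨ho.choose, ho.choose_spec.symm⟩ hn
    rcases hev with ⟨m, rfl⟩
    have : 2 * π * (1/4) * ((m + m : ℕ) : ℝ) = m * π := by push_cast; ring
    rw [this, Real.sin_nat_mul_pi, mul_zero, zero_mul]
  have h2 := (Function.Injective.hasSum_iff hi hz).mpr h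
  have h3 := h2.div_const 4
  refine h3.congr_fun fun k ↦ ?_
  have hsin : Real.sin (2 * π * (1/4) * ((2 * k + 1 : ℕ) : ℝ)) = (-1 : ℝ) ^ k := by
    have : 2 * π * (1/4) * ((2 * k + 1 : ℕ) : ℝ) = π / 2 - (-(k * π)) := by push_cast; ring
    rw [this, Real.sin_pi_div_two_sub, Real.cos_neg]
    simpa using Real.cos_nat_mul_pi_sub 0 k
  simp only [Function.comp, hsin]
  rw [eq_div_iff (by norm_num : (4:ℝ) ≠ 0)]
  have hexp : -π * ((2 * k + 1 : ℕ) : ℝ) ^ 2 * (π * x / 8) =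
      -(((k : ℝ) + 1 / 2) ^ 2) * π ^ 2 * x / 2 := by push_cast; ring
  rw [hexp]
  push_cast
  ring

set_option maxHeartbeats 1000000 in
private lemma sin_eq_odd (x : ℝ) (hx : 0 < x) :
    sinKernel ((1/4 : ℝ) : UnitAddCircle) (π * x / 8) / 4
      = 2 * oddKernel ((1/4 : ℝ) : UnitAddCircle) (2 * π * x) := by
  set g : ℕ → ℝ := fun k ↦ (-1 : ℝ) ^ k * ((k : ℝ) + 1 / 2) *
      Real.exp (-((k : ℝ) + 1 / 2) ^ 2 * Real.pi ^ 2 * x / 2) with hg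
  have gs := hasSum_g x hx
  have hu : 0 < 2 * π * x := by positivity
  have hpair := (hasSum_int_oddKernel (1/4 : ℝ) hu).nat_add_neg_add_one
  have hpair' : HasSum (fun k : ℕ ↦ (g (2 * k) + g (2 * k + 1)) / 2)
      (oddKernel ((1/4 : ℝ) : UnitAddCircle) (2 * π * x)) := by
    refine hpair.congr_fun fun k ↦ ?_
    simp only [hg]
    have hp1 : (-1 : ℝ) ^ (2 * k) = 1 := by rw [pow_mul]; norm_num
    have hp2 : (-1 : ℝ) ^ (2 * k + 1) = -1 := by rw [pow_succ, hp1]; norm_num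
    rw [hp1, hp2]
    have e1 : -(((2 * k : ℕ) : ℝ) + 1 / 2) ^ 2 * π ^ 2 * x / 2 =
        -π * (((k : ℤ) : ℝ) + 1/4) ^ 2 * (2 * π * x) := by push_cast; ring
    have e2 : -(((2 * k + 1 : ℕ) : ℝ) + 1 / 2) ^ 2 * π ^ 2 * x / 2 =
        -π * ((((-((k : ℤ) + 1)) : ℤ) : ℝ) + 1/4) ^ 2 * (2 * π * x) := by push_cast; ring
    rw [e1, e2]
    push_cast
    ring
  have hie : Function.Injective (fun k : ℕ ↦ 2 * k) := by
    intro a b hab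
    have : 2 * a = 2 * b := hab
    omega
  have hio : Function.Injective (fun k : ℕ ↦ 2 * k + 1) := by
    intro a b hab
    have : 2 * a + 1 = 2 * b + 1 := hab
    omega
  have he := (gs.summable.comp_injective hie).hasSum
  have ho := (gs.summable.comp_injective hio).hasSum
  have hsum : HasSum g (∑' k, g (2 * k) + ∑' k, g (2 * k + 1)) := he.even_add_odd ho
  have hL : ∑' k, g (2 * k) + ∑' k, g (2 * k + 1)
      = sinKernel ((1/4 : ℝ) : UnitAddCircle) (π * x / 8) / 4 := hsum.unique gs
  have hadd : HasSum (fun k : ℕ ↦ (g (2 * k) + g (2 * k + 1)) / 2)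
      ((∑' k, g (2 * k) + ∑' k, g (2 * k + 1)) / 2) := (he.add ho).div_const 2
  have huniq := hpair'.unique hadd
  rw [huniq, hL]
  ring

/-- The Ciesielski–Taylor self-reciprocal relation:
`f₁^#(x) = (2/(πx))^{3/2} f₁^#(4/(π²x))` for `x > 0`. -/
theorem fOneSharp_self_reciprocal (x : ℝ) (hx : 0 < x) :
    fOneSharp x = (2 / (Real.pi * x)) ^ ((3 : ℝ) / 2) * fOneSharp (4 / (Real.pi ^ 2 * x)) := by
  have hpi := Real.pi_pos
  have hx' : 0 < 4 / (π ^ 2 * x) := by positivity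
  have h1 : fOneSharp x = π * (sinKernel ((1/4 : ℝ) : UnitAddCircle) (π * x / 8) / 4) := by
    rw [fOneSharp, (hasSum_g x hx).tsum_eq]
  have harg : π * (4 / (π ^ 2 * x)) / 8 = 1 / (2 * π * x) := by
    field_simp
    ring
  have h2 : fOneSharp (4 / (π ^ 2 * x)) =
      π * (sinKernel ((1/4 : ℝ) : UnitAddCircle) (1 / (2 * π * x)) / 4) := by
    rw [fOneSharp, (hasSum_g _ hx').tsum_eq, harg]
  have h3 := sin_eq_odd x hx
  have h4 := oddKernel_functional_equation ((1/4 : ℝ) : UnitAddCircle) (2 * π * x)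
  rw [h1, h3, h4, h2]
  have hA : (0:ℝ) < (π * x) ^ ((3:ℝ)/2) := Real.rpow_pos_of_pos (by positivity) _
  have hc : (0:ℝ) < (2:ℝ) ^ ((3:ℝ)/2) := Real.rpow_pos_of_pos (by norm_num) _
  have hsplit : (2 * π * x) ^ ((3:ℝ)/2) = (2:ℝ) ^ ((3:ℝ)/2) * (π * x) ^ ((3:ℝ)/2) := by
    rw [mul_assoc, Real.mul_rpow (by norm_num) (by positivity)]
  have hdiv : (2 / (π * x)) ^ ((3:ℝ)/2) = (2:ℝ) ^ ((3:ℝ)/2) / (π * x) ^ ((3:ℝ)/2) :=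
    Real.div_rpow (by norm_num) (by positivity) _
  have hcsq : (2:ℝ) ^ ((3:ℝ)/2) * (2:ℝ) ^ ((3:ℝ)/2) = 8 := by
    rw [← Real.rpow_add (by norm_num : (0:ℝ) < 2)]
    norm_num
  rw [hsplit, hdiv]
  field_simp
  linear_combination (-(sinKernel ((1/4 : ℝ) : UnitAddCircle) (1 / (π * 2 * x)))) * hcsq
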